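/- Let $G$ be a locally compact second countable abelian semigroup with a left quasi-Haar measure $\lambda_G$, acting continuously on a compact metric space $X$ with a Bohr almost periodic point $y$ such that $X = \mathrm{cls}_X G(y)$, and let $\mu$ be the unique $G$-invariant Borel probability measure on $X$. Let $(F_n)_{n=1}^\infty$ be a Følner sequence of compact subsets of $G$ with respect to $\lambda_G$. Then for every continuous $\varphi : X \to \mathbb{R}$ and every $x \in X$, $\frac{1}{\lambda_G(F_n)} \int_{F_n} \varphi(g(x))\, d\lambda_G(g) \to \int_X \varphi \, d\mu$ as $n \to \infty$. -/

import Mathlib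

open MeasureTheory MulAction Set Pointwise Filter Topology

/-- A point `y` is Bohr almost periodic for the action of `G` on `X`. -/
def IsBohrAlmostPeriodicPt {G X : Type*} [Monoid G] [TopologicalSpace G]
    [MetricSpace X] [MulAction G X] (y : X) : Prop :=
  ∀ ε > (0 : ℝ), ∃ L : Set G, IsCompact L ∧
    {τ : G | ∀ g : G, dist (g • y) ((τ * g) • y) < ε} * L = Set.univ

section Aux

set_option linter.unusedSectionVars false

variable {G : Type*} [CommMonoid G] [TopologicalSpace G] [ContinuousMul G] [T2Space G]
    [MeasurableSpace G] [BorelSpace G]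
    (lamG : Measure G) [IsFiniteMeasureOnCompacts lamG]

private lemma bohr_quasi_singleton
    (hquasi : ∀ K : Set G, IsCompact K → ∀ g ∈ K,
      lamG ((fun t => g * t) '' K) = lamG K) (g : G) : lamG {g * g} = lamG {g} := by
  have := hquasi {g} isCompact_singleton g rfl
  simpa [Set.image_singleton] using this

private lemma bohr_quasi_lower [lamG.InnerRegularCompactLTTop]
    (hquasi : ∀ K : Set G, IsCompact K → ∀ g ∈ K,
      lamG ((fun t => g * t) '' K) = lamG K)
    (K : Set G) (hK : IsCompact K) (g : G) (hgK : g ∈ K)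
    (A : Set G) (hAsub : A ⊆ (fun t => g * t) '' K) (hA : MeasurableSet A) :
    lamG A ≤ lamG ((fun t => g * t) ⁻¹' A ∩ K) := by
  have hγc : Continuous (fun t => g * t) := continuous_const.mul continuous_id
  have hAne : lamG A ≠ ⊤ :=
    ((measure_mono hAsub).trans_lt (hK.image hγc).measure_lt_top).ne
  refine le_of_forall_lt ?_
  intro r hr
  obtain ⟨C₀, hC₀A, hC₀c, hrC₀⟩ := hA.exists_lt_isCompact_of_ne_top hAne hr
  by_cases hg2 : g * g ∈ A
  · have hC₁c : IsCompact (C₀ ∪ {g * g}) := hC₀c.union isCompact_singleton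
    have hC₁A : C₀ ∪ {g * g} ⊆ A := union_subset hC₀A (by simpa using hg2)
    have hBc : IsCompact ((fun t => g * t) ⁻¹' (C₀ ∪ {g * g}) ∩ K) :=
      hK.inter_left (hC₁c.isClosed.preimage hγc)
    have hgB : g ∈ (fun t => g * t) ⁻¹' (C₀ ∪ {g * g}) ∩ K :=
      ⟨mem_union_right _ rfl, hgK⟩
    have himg : (fun t => g * t) '' ((fun t => g * t) ⁻¹' (C₀ ∪ {g * g}) ∩ K)
        = C₀ ∪ {g * g} := by
      apply subset_antisymm
      · rintro a ⟨t, ⟨ht1, _⟩, rfl⟩; exact ht1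
      · intro a ha
        obtain ⟨k, hk, rfl⟩ := hAsub (hC₁A ha)
        exact ⟨k, ⟨ha, hk⟩, rfl⟩
    have key := hquasi _ hBc g hgB
    rw [himg] at key
    calc r < lamG C₀ := hrC₀
      _ ≤ lamG (C₀ ∪ {g * g}) := measure_mono subset_union_left
      _ = lamG ((fun t => g * t) ⁻¹' (C₀ ∪ {g * g}) ∩ K) := key
      _ ≤ lamG ((fun t => g * t) ⁻¹' A ∩ K) :=
          measure_mono (inter_subset_inter_left _ (preimage_mono hC₁A))
  · have hBc : IsCompact ((fun t => g * t) ⁻¹' C₀ ∩ K) :=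
      hK.inter_left (hC₀c.isClosed.preimage hγc)
    have hgB : g ∉ (fun t => g * t) ⁻¹' C₀ ∩ K := fun h => hg2 (hC₀A h.1)
    have hBc' : IsCompact (((fun t => g * t) ⁻¹' C₀ ∩ K) ∪ {g}) :=
      hBc.union isCompact_singleton
    have himg : (fun t => g * t) '' (((fun t => g * t) ⁻¹' C₀ ∩ K) ∪ {g})
        = C₀ ∪ {g * g} := by
      rw [image_union, image_singleton]
      congr 1
      apply subset_antisymm
      · rintro a ⟨t, ⟨ht1, _⟩, rfl⟩; exact ht1
      · intro a ha
        obtain ⟨k, hk, rfl⟩ := hAsub (hC₀A ha)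
        exact ⟨k, ⟨ha, hk⟩, rfl⟩
    have key := hquasi _ hBc' g (mem_union_right _ rfl)
    rw [himg] at key
    have hg2C : g * g ∉ C₀ := fun h => hg2 (hC₀A h)
    have e1 : lamG (C₀ ∪ {g * g}) = lamG C₀ + lamG {g * g} := by
      rw [measure_union (by simpa [disjoint_singleton_right] using hg2C)
        (measurableSet_singleton _)]
    have e2 : lamG (((fun t => g * t) ⁻¹' C₀ ∩ K) ∪ {g})
        = lamG ((fun t => g * t) ⁻¹' C₀ ∩ K) + lamG {g} := by
      rw [measure_union (by simpa [disjoint_singleton_right] using hgB)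
        (measurableSet_singleton _)]
    have e3 : lamG {g * g} = lamG {g} := bohr_quasi_singleton lamG hquasi g
    have hfin : lamG {g} ≠ ⊤ := (isCompact_singleton (x := g)).measure_lt_top.ne
    have e4 : lamG C₀ = lamG ((fun t => g * t) ⁻¹' C₀ ∩ K) := by
      have hthis := key
      rw [e1, e2, e3] at hthis
      exact WithTop.add_right_cancel hfin hthis
    calc r < lamG C₀ := hrC₀
      _ = lamG ((fun t => g * t) ⁻¹' C₀ ∩ K) := e4
      _ ≤ lamG ((fun t => g * t) ⁻¹' A ∩ K) :=
          measure_mono (inter_subset_inter_left _ (preimage_mono hC₀A))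

private lemma bohr_quasi_eq [lamG.InnerRegularCompactLTTop]
    (hquasi : ∀ K : Set G, IsCompact K → ∀ g ∈ K,
      lamG ((fun t => g * t) '' K) = lamG K)
    (K : Set G) (hK : IsCompact K) (g : G) (hgK : g ∈ K)
    (A : Set G) (hAsub : A ⊆ (fun t => g * t) '' K) (hA : MeasurableSet A) :
    lamG ((fun t => g * t) ⁻¹' A ∩ K) = lamG A := by
  have hγc : Continuous (fun t => g * t) := continuous_const.mul continuous_id
  have hgKc : IsCompact ((fun t => g * t) '' K) := hK.image hγc
  have hgKm : MeasurableSet ((fun t => g * t) '' K) := hgKc.measurableSet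
  set A' : Set G := (fun t => g * t) '' K \ A with hA'def
  have hA'm : MeasurableSet A' := hgKm.diff hA
  have hA'sub : A' ⊆ (fun t => g * t) '' K := diff_subset
  have low := bohr_quasi_lower lamG hquasi K hK g hgK A hAsub hA
  have low' := bohr_quasi_lower lamG hquasi K hK g hgK A' hA'sub hA'm
  have hKsplit : K = ((fun t => g * t) ⁻¹' A ∩ K) ∪ ((fun t => g * t) ⁻¹' A' ∩ K) := by
    apply subset_antisymm
    · intro t ht
      by_cases h : g * t ∈ A
      · exact Or.inl ⟨h, ht⟩
      · exact Or.inr ⟨⟨⟨t, ht, rfl⟩, h⟩, ht⟩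
    · exact union_subset inter_subset_right inter_subset_right
  have hdisj : Disjoint ((fun t => g * t) ⁻¹' A ∩ K) ((fun t => g * t) ⁻¹' A' ∩ K) := by
    rw [disjoint_iff_inter_eq_empty]
    ext t
    simp only [mem_inter_iff, mem_preimage, mem_empty_iff_false, iff_false]
    rintro ⟨⟨h1, -⟩, ⟨h2, -⟩⟩
    exact h2.2 h1
  have hAm' : MeasurableSet ((fun t => g * t) ⁻¹' A' ∩ K) :=
    (hA'm.preimage hγc.measurable).inter hK.measurableSet
  have hsum : lamG K = lamG ((fun t => g * t) ⁻¹' A ∩ K)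
      + lamG ((fun t => g * t) ⁻¹' A' ∩ K) := by
    conv_lhs => rw [hKsplit]
    exact measure_union hdisj hAm'
  have hsum2 : lamG ((fun t => g * t) '' K) = lamG A + lamG A' := by
    have huni : (fun t => g * t) '' K = A ∪ A' := by
      rw [union_diff_cancel' (le_refl A) hAsub]
    rw [huni, measure_union (disjoint_sdiff_right) hA'm]
  have hKK : lamG ((fun t => g * t) '' K) = lamG K := hquasi K hK g hgK
  have hfinA' : lamG A' ≠ ⊤ := ((measure_mono hA'sub).trans_lt hgKc.measure_lt_top).ne
  refine le_antisymm ?_ low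
  have hcomb : lamG ((fun t => g * t) ⁻¹' A ∩ K) + lamG A' ≤ lamG A + lamG A' := by
    calc lamG ((fun t => g * t) ⁻¹' A ∩ K) + lamG A'
        ≤ lamG ((fun t => g * t) ⁻¹' A ∩ K) + lamG ((fun t => g * t) ⁻¹' A' ∩ K) :=
          add_le_add_right low' _
      _ = lamG K := hsum.symm
      _ = lamG A + lamG A' := by rw [← hKK, hsum2]
  exact ENNReal.le_of_add_le_add_right hfinA' hcomb

private lemma bohr_quasi_map [lamG.InnerRegularCompactLTTop]
    (hquasi : ∀ K : Set G, IsCompact K → ∀ g ∈ K,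
      lamG ((fun t => g * t) '' K) = lamG K)
    (K : Set G) (hK : IsCompact K) (g : G) (hgK : g ∈ K) :
    Measure.map (fun t => g * t) (lamG.restrict K)
      = lamG.restrict ((fun t => g * t) '' K) := by
  have hγc : Continuous (fun t => g * t) := continuous_const.mul continuous_id
  ext A hA
  rw [Measure.map_apply hγc.measurable hA,
    Measure.restrict_apply (hA.preimage hγc.measurable),
    Measure.restrict_apply hA]
  have hred : (fun t => g * t) ⁻¹' A ∩ K
      = (fun t => g * t) ⁻¹' (A ∩ (fun t => g * t) '' K) ∩ K := by
    ext t
    simp only [mem_inter_iff, mem_preimage]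
    exact ⟨fun ⟨h1, h2⟩ => ⟨⟨h1, ⟨t, h2, rfl⟩⟩, h2⟩, fun ⟨⟨h1, _⟩, h2⟩ => ⟨h1, h2⟩⟩
  rw [hred]
  exact bohr_quasi_eq lamG hquasi K hK g hgK _ inter_subset_right
    (hA.inter (hK.image hγc).measurableSet)

private lemma bohr_integral_sdiff_bound (f : G → ℝ) (hf : Continuous f) (C : ℝ)
    (hC : ∀ t, ‖f t‖ ≤ C)
    (A B : Set G) (hA : IsCompact A) (hB : IsCompact B) :
    |∫ t in B, f t ∂lamG - ∫ t in A, f t ∂lamG| ≤ C * (lamG (symmDiff A B)).toReal := by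
  have hiA : IntegrableOn f A lamG := hf.continuousOn.integrableOn_compact hA
  have hiB : IntegrableOn f B lamG := hf.continuousOn.integrableOn_compact hB
  have eB : ∫ t in B ∩ A, f t ∂lamG + ∫ t in B \ A, f t ∂lamG = ∫ t in B, f t ∂lamG :=
    integral_inter_add_diff hA.measurableSet hiB
  have eA : ∫ t in A ∩ B, f t ∂lamG + ∫ t in A \ B, f t ∂lamG = ∫ t in A, f t ∂lamG :=
    integral_inter_add_diff hB.measurableSet hiA
  have hBA : ∫ t in B, f t ∂lamG - ∫ t in A, f t ∂lamG
      = ∫ t in B \ A, f t ∂lamG - ∫ t in A \ B, f t ∂lamG := by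
    rw [← eB, ← eA, inter_comm]; ring
  have h1 : ‖∫ t in B \ A, f t ∂lamG‖ ≤ C * (lamG (B \ A)).toReal :=
    norm_setIntegral_le_of_norm_le_const
      ((measure_mono diff_subset).trans_lt hB.measure_lt_top) (fun x _ => hC x)
  have h2 : ‖∫ t in A \ B, f t ∂lamG‖ ≤ C * (lamG (A \ B)).toReal :=
    norm_setIntegral_le_of_norm_le_const
      ((measure_mono diff_subset).trans_lt hA.measure_lt_top) (fun x _ => hC x)
  have hsymm : (lamG (symmDiff A B)).toReal
      = (lamG (A \ B)).toReal + (lamG (B \ A)).toReal := by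
    rw [symmDiff_def]
    show (lamG (A \ B ∪ B \ A)).toReal = _
    rw [measure_union (disjoint_sdiff_sdiff) (hB.measurableSet.diff hA.measurableSet)]
    rw [ENNReal.toReal_add ((measure_mono diff_subset).trans_lt hA.measure_lt_top).ne
      ((measure_mono diff_subset).trans_lt hB.measure_lt_top).ne]
  rw [hBA, hsymm]
  calc |∫ t in B \ A, f t ∂lamG - ∫ t in A \ B, f t ∂lamG|
      ≤ ‖∫ t in B \ A, f t ∂lamG‖ + ‖∫ t in A \ B, f t ∂lamG‖ := abs_sub _ _
    _ ≤ C * (lamG (B \ A)).toReal + C * (lamG (A \ B)).toReal := add_le_add h1 h2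
    _ = C * ((lamG (A \ B)).toReal + (lamG (B \ A)).toReal) := by ring

private lemma bohr_translation_bound [lamG.InnerRegularCompactLTTop]
    (hquasi : ∀ K : Set G, IsCompact K → ∀ g ∈ K,
      lamG ((fun t => g * t) '' K) = lamG K)
    (f : G → ℝ) (hf : Continuous f) (C : ℝ) (hC : ∀ t, ‖f t‖ ≤ C)
    (F : Set G) (hF : IsCompact F) (g : G) :
    |∫ t in F, f (g * t) ∂lamG - ∫ t in F, f t ∂lamG|
      ≤ 2 * C * (lamG (symmDiff F ((fun t => g * t) '' F))).toReal := by
  have hγc : Continuous (fun t => g * t) := continuous_const.mul continuous_id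
  have hgF : IsCompact ((fun t => g * t) '' F) := hF.image hγc
  have hC0 : 0 ≤ C := le_trans (norm_nonneg _) (hC (g * g))
  have hsd : |∫ t in (fun t => g * t) '' F, f t ∂lamG - ∫ t in F, f t ∂lamG|
      ≤ C * (lamG (symmDiff F ((fun t => g * t) '' F))).toReal :=
    bohr_integral_sdiff_bound lamG f hf C hC F _ hF hgF
  by_cases hgmem : g ∈ F
  · have hmap := bohr_quasi_map lamG hquasi F hF g hgmem
    have e1 : ∫ t in F, f (g * t) ∂lamG = ∫ t in (fun t => g * t) '' F, f t ∂lamG := by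
      rw [← hmap, integral_map hγc.measurable.aemeasurable hf.aestronglyMeasurable]
    rw [e1]
    calc |∫ t in (fun t => g * t) '' F, f t ∂lamG - ∫ t in F, f t ∂lamG|
        ≤ C * (lamG (symmDiff F ((fun t => g * t) '' F))).toReal := hsd
      _ ≤ 2 * C * (lamG (symmDiff F ((fun t => g * t) '' F))).toReal := by
          nlinarith [ENNReal.toReal_nonneg (a := lamG (symmDiff F ((fun t => g * t) '' F)))]
  · set K : Set G := F ∪ {g} with hKdef
    have hKc : IsCompact K := hF.union isCompact_singleton
    have hgK : g ∈ K := Or.inr rfl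
    have hmap := bohr_quasi_map lamG hquasi K hKc g hgK
    have hdisj : Disjoint F ({g} : Set G) := by
      simpa [disjoint_singleton_right] using hgmem
    have hint : IntegrableOn (fun t => f (g * t)) K lamG :=
      (hf.comp hγc).continuousOn.integrableOn_compact hKc
    have eK : ∫ t in K, f (g * t) ∂lamG
        = ∫ t in F, f (g * t) ∂lamG + (lamG {g}).toReal * f (g * g) := by
      rw [hKdef, setIntegral_union hdisj (measurableSet_singleton g)
        (hint.mono_set subset_union_left) (hint.mono_set subset_union_right),
        integral_singleton]
      simp [smul_eq_mul, Measure.real]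
    have eKmap : ∫ t in K, f (g * t) ∂lamG
        = ∫ t in (fun t => g * t) '' K, f t ∂lamG := by
      rw [← hmap, integral_map hγc.measurable.aemeasurable hf.aestronglyMeasurable]
    have himgK : (fun t => g * t) '' K = ((fun t => g * t) '' F) ∪ {g * g} := by
      rw [hKdef, image_union, image_singleton]
    by_cases hg2 : g * g ∈ (fun t => g * t) '' F
    · have himgK' : (fun t => g * t) '' K = (fun t => g * t) '' F := by
        rw [himgK, union_eq_self_of_subset_right (by simpa using hg2)]
      have hmass := hquasi K hKc g hgK
      rw [himgK'] at hmass
      have hKmass : lamG K = lamG F + lamG {g} :=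
        measure_union hdisj (measurableSet_singleton g)
      have hFfin : lamG F ≠ ⊤ := hF.measure_lt_top.ne
      have hgfin : lamG {g} ≠ ⊤ := (isCompact_singleton (x := g)).measure_lt_top.ne
      have hatom : lamG {g} ≤ lamG (symmDiff F ((fun t => g * t) '' F)) := by
        have h1 : lamG ((fun t => g * t) '' F) = lamG F + lamG {g} :=
          hmass.trans hKmass
        have h2 : lamG ((fun t => g * t) '' F)
            ≤ lamG F + lamG ((fun t => g * t) '' F \ F) := by
          calc lamG ((fun t => g * t) '' F)
              ≤ lamG (F ∪ ((fun t => g * t) '' F \ F)) :=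
                measure_mono (fun a ha => by
                  by_cases h : a ∈ F
                  · exact Or.inl h
                  · exact Or.inr ⟨ha, h⟩)
            _ ≤ lamG F + lamG ((fun t => g * t) '' F \ F) := measure_union_le _ _
        have h3 : lamG F + lamG {g} ≤ lamG F + lamG ((fun t => g * t) '' F \ F) := by
          rw [← h1]; exact h2
        have h4 : lamG {g} ≤ lamG ((fun t => g * t) '' F \ F) :=
          ENNReal.le_of_add_le_add_left hFfin h3
        exact h4.trans (measure_mono (fun a ha => Or.inr ha))
      have eI : ∫ t in F, f (g * t) ∂lamG
          = ∫ t in (fun t => g * t) '' F, f t ∂lamG - (lamG {g}).toReal * f (g * g) := by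
        have hthis := eK
        rw [eKmap, himgK'] at hthis
        linarith [hthis]
      rw [eI]
      have hsdfin : lamG (symmDiff F ((fun t => g * t) '' F)) ≠ ⊤ := by
        refine ((measure_mono ?_).trans_lt (hF.union hgF).measure_lt_top).ne
        intro a ha
        rcases Set.mem_symmDiff.mp ha with ⟨h, -⟩ | ⟨h, -⟩
        exacts [Or.inl h, Or.inr h]
      have hb1 : |(lamG {g}).toReal * f (g * g)|
          ≤ C * (lamG (symmDiff F ((fun t => g * t) '' F))).toReal := by
        rw [abs_mul]
        have habs : |(lamG {g}).toReal| = (lamG {g}).toReal := abs_of_nonneg ENNReal.toReal_nonneg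
        rw [habs]
        have hle : (lamG {g}).toReal ≤ (lamG (symmDiff F ((fun t => g * t) '' F))).toReal :=
          (ENNReal.toReal_le_toReal hgfin hsdfin).mpr hatom
        calc (lamG {g}).toReal * |f (g * g)| ≤ (lamG {g}).toReal * C :=
            mul_le_mul_of_nonneg_left (le_trans (le_abs_self _) (by
              simpa [Real.norm_eq_abs] using hC (g*g))) ENNReal.toReal_nonneg
          _ ≤ (lamG (symmDiff F ((fun t => g * t) '' F))).toReal * C :=
              mul_le_mul_of_nonneg_right hle hC0
          _ = C * (lamG (symmDiff F ((fun t => g * t) '' F))).toReal := mul_comm _ _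
      have hrearr : ∫ t in (fun t => g * t) '' F, f t ∂lamG - (lamG {g}).toReal * f (g * g)
            - ∫ t in F, f t ∂lamG
          = (∫ t in (fun t => g * t) '' F, f t ∂lamG - ∫ t in F, f t ∂lamG)
            - (lamG {g}).toReal * f (g * g) := by ring
      rw [hrearr]
      calc |(∫ t in (fun t => g * t) '' F, f t ∂lamG - ∫ t in F, f t ∂lamG)
            - (lamG {g}).toReal * f (g * g)|
          ≤ |∫ t in (fun t => g * t) '' F, f t ∂lamG - ∫ t in F, f t ∂lamG|
            + |(lamG {g}).toReal * f (g * g)| := abs_sub _ _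
        _ ≤ C * (lamG (symmDiff F ((fun t => g * t) '' F))).toReal
            + C * (lamG (symmDiff F ((fun t => g * t) '' F))).toReal := add_le_add hsd hb1
        _ = 2 * C * (lamG (symmDiff F ((fun t => g * t) '' F))).toReal := by ring
    · have hdisj2 : Disjoint ((fun t => g * t) '' F) ({g * g} : Set G) := by
        simpa [disjoint_singleton_right] using hg2
      have eImg : ∫ t in (fun t => g * t) '' K, f t ∂lamG
          = ∫ t in (fun t => g * t) '' F, f t ∂lamG + (lamG {g * g}).toReal * f (g * g) := by
        rw [himgK]
        have hfint : IntegrableOn f ((fun t => g * t) '' K) lamG :=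
          hf.continuousOn.integrableOn_compact (hKc.image hγc)
        rw [setIntegral_union hdisj2 (measurableSet_singleton _)
          (by rw [himgK] at hfint; exact hfint.mono_set subset_union_left)
          (by rw [himgK] at hfint; exact hfint.mono_set subset_union_right),
          integral_singleton]
        simp [smul_eq_mul, Measure.real]
      have eI : ∫ t in F, f (g * t) ∂lamG = ∫ t in (fun t => g * t) '' F, f t ∂lamG := by
        have h := eK
        rw [eKmap, eImg, bohr_quasi_singleton lamG hquasi g] at h
        linarith [h, eK]
      rw [eI]
      calc |∫ t in (fun t => g * t) '' F, f t ∂lamG - ∫ t in F, f t ∂lamG|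
          ≤ C * (lamG (symmDiff F ((fun t => g * t) '' F))).toReal := hsd
        _ ≤ 2 * C * (lamG (symmDiff F ((fun t => g * t) '' F))).toReal := by
            nlinarith [ENNReal.toReal_nonneg (a := lamG (symmDiff F ((fun t => g * t) '' F)))]

end Aux

section Dyn

set_option linter.unusedSectionVars false

variable {G X : Type*} [CommMonoid G] [TopologicalSpace G] [ContinuousMul G]
    [MetricSpace X] [CompactSpace X] [MulAction G X] [ContinuousSMul G X]

private lemma bohr_period_transfer (y : X)
    (hdense : closure (MulAction.orbit G y) = Set.univ)
    (ε : ℝ) (τ : G) (hτ : ∀ g : G, dist (g • y) ((τ * g) • y) < ε) :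
    ∀ z : X, ∀ h : G, dist (h • z) ((τ * h) • z) ≤ ε := by
  have hclosed : IsClosed {z : X | ∀ h : G, dist (h • z) ((τ * h) • z) ≤ ε} := by
    have hset : {z : X | ∀ h : G, dist (h • z) ((τ * h) • z) ≤ ε}
        = ⋂ h : G, {z : X | dist (h • z) ((τ * h) • z) ≤ ε} := by
      ext z; simp
    rw [hset]
    refine isClosed_iInter fun h => isClosed_le ?_ continuous_const
    exact Continuous.dist (continuous_const_smul h) (continuous_const_smul (τ * h))
  have horbit : MulAction.orbit G y ⊆ {z : X | ∀ h : G, dist (h • z) ((τ * h) • z) ≤ ε} := by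
    rintro z ⟨g, rfl⟩
    intro h
    have e1 : h • g • y = (h * g) • y := (mul_smul h g y).symm
    have e2 : (τ * h) • g • y = (τ * (h * g)) • y := by
      rw [← mul_smul, mul_assoc]
    rw [e1, e2]
    exact (hτ (h * g)).le
  intro z
  have hz : z ∈ closure (MulAction.orbit G y) := by rw [hdense]; exact mem_univ z
  exact (hclosed.closure_subset_iff.mpr horbit) hz

private lemma bohr_local_equicont (φ : C(X, ℝ)) (L : Set G) (hL : IsCompact L) (z₀ : X)
    (δ : ℝ) (hδ : 0 < δ) :
    ∃ ρ > 0, ∀ z : X, dist z z₀ < ρ → ∀ l ∈ L, |φ (l • z) - φ (l • z₀)| ≤ δ := by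
  have hΨ : Continuous fun p : G × X => φ (p.1 • p.2) :=
    φ.continuous.comp continuous_smul
  have key : ∀ l ∈ L, ∃ U : Set G, U ∈ 𝓝 l ∧ ∃ r > 0, ∀ l' ∈ U, ∀ z : X,
      dist z z₀ < r → |φ (l' • z) - φ (l • z₀)| ≤ δ / 2 := by
    intro l hl
    have hc : ContinuousAt (fun p : G × X => φ (p.1 • p.2)) (l, z₀) := hΨ.continuousAt
    have hev : ∀ᶠ p : G × X in 𝓝 (l, z₀), |φ (p.1 • p.2) - φ (l • z₀)| ≤ δ / 2 := by
      have htt : Tendsto (fun p : G × X => φ (p.1 • p.2)) (𝓝 (l, z₀)) (𝓝 (φ (l • z₀))) := hc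
      have hmem := htt (Metric.closedBall_mem_nhds (φ (l • z₀)) (by linarith : (0:ℝ) < δ/2))
      filter_upwards [hmem] with p hp
      simpa [Metric.mem_closedBall, Real.dist_eq] using hp
    rw [nhds_prod_eq] at hev
    obtain ⟨U, hU, V, hV, hUV⟩ := Filter.mem_prod_iff.mp hev
    obtain ⟨r, hr, hball⟩ := Metric.mem_nhds_iff.mp hV
    refine ⟨U, hU, r, hr, fun l' hl' z hz => ?_⟩
    exact hUV (Set.mk_mem_prod hl' (hball hz))
  choose! U hU r hr hbound using key
  obtain ⟨t, htL, hcover⟩ := hL.elim_nhds_subcover U (fun l hl => hU l hl)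
  rcases t.eq_empty_or_nonempty with rfl | htne
  · refine ⟨1, one_pos, fun z _ l hl => absurd (hcover hl) (by simp)⟩
  refine ⟨t.inf' htne r, ?_, ?_⟩
  · show (0:ℝ) < t.inf' htne r
    rw [Finset.lt_inf'_iff]
    exact fun l hl => hr l (htL l hl)
  · intro z hz l hl
    obtain ⟨l₀, hl₀t, hl₀U⟩ := by
      have hm := hcover hl
      simpa using hm
    have hz' : dist z z₀ < r l₀ :=
      lt_of_lt_of_le hz (by exact Finset.inf'_le r hl₀t)
    have h1 : |φ (l • z) - φ (l₀ • z₀)| ≤ δ / 2 :=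
      hbound l₀ (htL l₀ hl₀t) l hl₀U z hz'
    have h2 : |φ (l • z₀) - φ (l₀ • z₀)| ≤ δ / 2 :=
      hbound l₀ (htL l₀ hl₀t) l hl₀U z₀ (by simpa using hr l₀ (htL l₀ hl₀t))
    calc |φ (l • z) - φ (l • z₀)|
        = |(φ (l • z) - φ (l₀ • z₀)) - (φ (l • z₀) - φ (l₀ • z₀))| := by ring_nf
      _ ≤ |φ (l • z) - φ (l₀ • z₀)| + |φ (l • z₀) - φ (l₀ • z₀)| := abs_sub _ _
      _ ≤ δ / 2 + δ / 2 := add_le_add h1 h2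
      _ = δ := by ring

end Dyn

/-- Bohr's pointwise convergence theorem: Følner averages of a continuous
function along a Bohr almost periodic action converge to the space average. -/
theorem bohr_pointwise_convergence
    {G X : Type*} [CommMonoid G] [TopologicalSpace G] [ContinuousMul G]
    [LocallyCompactSpace G] [SecondCountableTopology G] [T2Space G]
    [MeasurableSpace G] [BorelSpace G]
    [MetricSpace X] [CompactSpace X] [MulAction G X] [ContinuousSMul G X]
    [MeasurableSpace X] [BorelSpace X]
    (lamG : Measure G) [IsFiniteMeasureOnCompacts lamG]
    -- `lamG` is a quasi-Haar (Radon) measure: positive on some compact set,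
    -- and invariant on translates of compact sets by their own elements
    (hradon : ∃ K : Set G, IsCompact K ∧ 0 < lamG K)
    (hquasi : ∀ K : Set G, IsCompact K → ∀ g ∈ K,
      lamG ((fun t => g * t) '' K) = lamG K)
    (y : X) (hy : IsBohrAlmostPeriodicPt (G := G) y)
    (hdense : closure (MulAction.orbit G y) = Set.univ)
    (μ : Measure X) [IsProbabilityMeasure μ]
    (hinv : ∀ g : G, Measure.map (fun x => g • x) μ = μ)
    (huniq : ∀ ν : Measure X, IsProbabilityMeasure ν →
      (∀ g : G, Measure.map (fun x => g • x) ν = ν) → ν = μ)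
    (F : ℕ → Set G) (hFcomp : ∀ n, IsCompact (F n))
    (hFpos : ∀ n, 0 < lamG (F n))
    (hFolner : ∀ g : G, Tendsto
      (fun n => lamG (symmDiff (F n) ((fun t => g * t) '' (F n))) / lamG (F n))
      atTop (𝓝 0)) :
    ∀ φ : C(X, ℝ), ∀ x : X, Tendsto
      (fun n => (lamG (F n)).toReal⁻¹ * ∫ g in F n, φ (g • x) ∂lamG)
      atTop (𝓝 (∫ z, φ z ∂μ)) := by
  intro φ x
  -- notation
  set c : ℕ → ℝ := fun n => (lamG (F n)).toReal with hc_def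
  have hc_pos : ∀ n, 0 < c n := fun n =>
    ENNReal.toReal_pos (hFpos n).ne' (hFcomp n).measure_lt_top.ne
  set I : ℕ → X → ℝ := fun n z => ∫ t in F n, φ (t • z) ∂lamG with hI_def
  set Av : ℕ → X → ℝ := fun n z => (c n)⁻¹ * I n z with hAv_def
  have hIcont : ∀ n, Continuous fun z => I n z := by
    intro n
    haveI : Fact (lamG (F n) < ⊤) := ⟨(hFcomp n).measure_lt_top⟩
    refine continuous_of_dominated (bound := fun _ => ‖φ‖) (fun z => ?_) (fun z => ?_) ?_ ?_
    · exact (φ.continuous.comp (continuous_id.smul continuous_const)).aestronglyMeasurable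
    · exact Filter.Eventually.of_forall fun t => φ.norm_coe_le_norm _
    · exact integrable_const _
    · exact Filter.Eventually.of_forall fun t => φ.continuous.comp (continuous_const_smul t)
  have hIbound : ∀ n z, |I n z| ≤ ‖φ‖ * c n := by
    intro n z
    rw [← Real.norm_eq_abs]
    exact norm_setIntegral_le_of_norm_le_const (hFcomp n).measure_lt_top
      (fun t _ => φ.norm_coe_le_norm _)
  have hIint : ∀ n z, IntegrableOn (fun t => φ (t • z)) (F n) lamG := fun n z =>
    (φ.continuous.comp (continuous_id.smul continuous_const)).continuousOn.integrableOn_compact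
      (hFcomp n)
  -- Heart: Følner averages at any point converge to those at y
  have heart : ∀ z : X, Tendsto (fun n => Av n z - Av n y) atTop (𝓝 0) := by
    intro z
    rw [NormedAddCommGroup.tendsto_nhds_zero]
    intro ε0 hε0
    set δ : ℝ := ε0 / 6 with hδ_def
    have hδ : 0 < δ := by positivity
    -- uniform continuity modulus of φ
    obtain ⟨ε1, hε1, hmod0⟩ := Metric.uniformContinuous_iff.mp
      (CompactSpace.uniformContinuous_of_continuous φ.continuous) δ hδ
    set ε2 : ℝ := ε1 / 2 with hε2_def
    have hε2 : 0 < ε2 := by positivity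
    have hmod : ∀ u v : X, dist u v ≤ ε2 → |φ u - φ v| ≤ δ := by
      intro u v huv
      have hlt : dist u v < ε1 := lt_of_le_of_lt huv (by linarith)
      have := hmod0 hlt
      rw [Real.dist_eq] at this
      exact this.le
    -- almost periods
    obtain ⟨L, hLc, hLP⟩ := hy ε2 hε2
    -- equicontinuity at z over L
    obtain ⟨ρ, hρ, hequi⟩ := bohr_local_equicont φ L hLc z δ hδ
    -- orbit point close to z
    have hzcl : z ∈ closure (MulAction.orbit G y) := by rw [hdense]; exact mem_univ z
    obtain ⟨w, hw, hwz⟩ := Metric.mem_closure_iff.mp hzcl ρ hρ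
    obtain ⟨g₀, rfl⟩ := hw
    obtain ⟨τ, hτP, l, hlL, hτl⟩ := Set.mem_mul.mp (by rw [hLP]; exact mem_univ g₀)
    -- pointwise estimate 1 : |φ (t • z) - φ (t • (g₀ • y))| ≤ 3δ for all t
    have hE1 : ∀ t : G, |φ (t • z) - φ (t • (g₀ • y))| ≤ 3 * δ := by
      intro t
      obtain ⟨σ, hσP, m, hmL, hσm⟩ := Set.mem_mul.mp (by rw [hLP]; exact mem_univ t)
      have hper := bohr_period_transfer y hdense ε2 σ hσP
      have ha : |φ (t • z) - φ (m • z)| ≤ δ := by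
        have hd : dist (m • z) ((σ * m) • z) ≤ ε2 := hper z m
        rw [hσm] at hd
        have := hmod _ _ (by rw [dist_comm] at hd; exact hd)
        exact this
      have hb : |φ (t • (g₀ • y)) - φ (m • (g₀ • y))| ≤ δ := by
        have hd : dist (m • (g₀ • y)) ((σ * m) • (g₀ • y)) ≤ ε2 := hper (g₀ • y) m
        rw [hσm] at hd
        exact hmod _ _ (by rw [dist_comm] at hd; exact hd)
      have hcmid : |φ (m • (g₀ • y)) - φ (m • z)| ≤ δ :=
        hequi (g₀ • y) (by rw [dist_comm]; exact hwz) m hmL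
      calc |φ (t • z) - φ (t • (g₀ • y))|
          = |(φ (t • z) - φ (m • z)) - (φ (t • (g₀ • y)) - φ (m • (g₀ • y)))
            - (φ (m • (g₀ • y)) - φ (m • z))| := by ring_nf
        _ ≤ |(φ (t • z) - φ (m • z)) - (φ (t • (g₀ • y)) - φ (m • (g₀ • y)))|
            + |φ (m • (g₀ • y)) - φ (m • z)| := abs_sub _ _
        _ ≤ (|φ (t • z) - φ (m • z)| + |φ (t • (g₀ • y)) - φ (m • (g₀ • y))|)
            + |φ (m • (g₀ • y)) - φ (m • z)| := by
              exact add_le_add_left (abs_sub _ _) _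
        _ ≤ (δ + δ) + δ := add_le_add (add_le_add ha hb) hcmid
        _ = 3 * δ := by ring
    -- pointwise estimate 2 : |φ (t • (g₀ • y)) - φ (t • (l • y))| ≤ δ
    have hE2 : ∀ t : G, |φ (t • (g₀ • y)) - φ (t • (l • y))| ≤ δ := by
      intro t
      have e1 : t • (g₀ • y) = (τ * (t * l)) • y := by
        rw [← mul_smul, ← hτl]
        congr 1
        rw [mul_comm τ l, ← mul_assoc, mul_comm (t*l) τ]
      have e2 : t • (l • y) = (t * l) • y := (mul_smul t l y).symm
      rw [e1, e2]
      have hd := hτP (t * l)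
      rw [dist_comm] at hd
      exact hmod _ _ hd.le
    -- integral consequences
    have hint1 : ∀ n, |Av n z - Av n (g₀ • y)| ≤ 3 * δ := by
      intro n
      have hdiff : I n z - I n (g₀ • y)
          = ∫ t in F n, (φ (t • z) - φ (t • (g₀ • y))) ∂lamG :=
        (integral_sub (hIint n z) (hIint n (g₀ • y))).symm
      have hb : |I n z - I n (g₀ • y)| ≤ 3 * δ * c n := by
        rw [hdiff, ← Real.norm_eq_abs]
        exact norm_setIntegral_le_of_norm_le_const (hFcomp n).measure_lt_top
          (fun t _ => by rw [Real.norm_eq_abs]; exact hE1 t)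
      have : Av n z - Av n (g₀ • y) = (c n)⁻¹ * (I n z - I n (g₀ • y)) := by
        simp [hAv_def]; ring
      rw [this, abs_mul, abs_of_nonneg (inv_nonneg.mpr (hc_pos n).le)]
      calc (c n)⁻¹ * |I n z - I n (g₀ • y)| ≤ (c n)⁻¹ * (3 * δ * c n) :=
          mul_le_mul_of_nonneg_left hb (inv_nonneg.mpr (hc_pos n).le)
        _ = 3 * δ := by
            rw [inv_mul_eq_div, mul_div_assoc, div_self (hc_pos n).ne', mul_one]
    have hint2 : ∀ n, |Av n (g₀ • y) - Av n (l • y)| ≤ δ := by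
      intro n
      have hdiff : I n (g₀ • y) - I n (l • y)
          = ∫ t in F n, (φ (t • (g₀ • y)) - φ (t • (l • y))) ∂lamG :=
        (integral_sub (hIint n (g₀ • y)) (hIint n (l • y))).symm
      have hb : |I n (g₀ • y) - I n (l • y)| ≤ δ * c n := by
        rw [hdiff, ← Real.norm_eq_abs]
        exact norm_setIntegral_le_of_norm_le_const (hFcomp n).measure_lt_top
          (fun t _ => by rw [Real.norm_eq_abs]; exact hE2 t)
      have heq : Av n (g₀ • y) - Av n (l • y) = (c n)⁻¹ * (I n (g₀ • y) - I n (l • y)) := by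
        simp [hAv_def]; ring
      rw [heq, abs_mul, abs_of_nonneg (inv_nonneg.mpr (hc_pos n).le)]
      calc (c n)⁻¹ * |I n (g₀ • y) - I n (l • y)| ≤ (c n)⁻¹ * (δ * c n) :=
          mul_le_mul_of_nonneg_left hb (inv_nonneg.mpr (hc_pos n).le)
        _ = δ := by
            rw [inv_mul_eq_div, mul_div_assoc, div_self (hc_pos n).ne', mul_one]
    -- translation estimate for l
    have htrans : ∀ n, |Av n (l • y) - Av n y|
        ≤ (c n)⁻¹ * (2 * ‖φ‖ * (lamG (symmDiff (F n) ((fun t => l * t) '' (F n)))).toReal) := by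
      intro n
      have hfy : Continuous fun s : G => φ (s • y) :=
        φ.continuous.comp (continuous_id.smul continuous_const)
      have hrw : ∀ t : G, φ (t • (l • y)) = φ ((l * t) • y) := by
        intro t
        rw [← mul_smul, mul_comm]
      have hIl : I n (l • y) = ∫ t in F n, φ ((l * t) • y) ∂lamG := by
        simp only [hI_def]
        exact integral_congr_ae (Filter.Eventually.of_forall fun t => hrw t)
      have hTB := bohr_translation_bound lamG hquasi (fun s => φ (s • y)) hfy ‖φ‖
        (fun s => φ.norm_coe_le_norm _) (F n) (hFcomp n) l
      have heq : Av n (l • y) - Av n y = (c n)⁻¹ * (I n (l • y) - I n y) := by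
        simp [hAv_def]; ring
      rw [heq, abs_mul, abs_of_nonneg (inv_nonneg.mpr (hc_pos n).le)]
      refine mul_le_mul_of_nonneg_left ?_ (inv_nonneg.mpr (hc_pos n).le)
      rw [hIl]
      exact hTB
    -- the translation error tends to zero
    have hFol : Tendsto (fun n =>
        (c n)⁻¹ * (2 * ‖φ‖ * (lamG (symmDiff (F n) ((fun t => l * t) '' (F n)))).toReal))
        atTop (𝓝 0) := by
      have h0 := hFolner l
      have h1 : Tendsto (fun n =>
          (c n)⁻¹ * (lamG (symmDiff (F n) ((fun t => l * t) '' (F n)))).toReal)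
          atTop (𝓝 0) := by
        have hcomp := (ENNReal.tendsto_toReal (by simp : (0:ENNReal) ≠ ⊤)).comp h0
        have : Tendsto (fun n =>
            (lamG (symmDiff (F n) ((fun t => l * t) '' (F n))) / lamG (F n)).toReal)
            atTop (𝓝 0) := by simpa [Function.comp_def] using hcomp
        refine this.congr fun n => ?_
        rw [ENNReal.toReal_div, div_eq_inv_mul]
      have h3 := h1.const_mul (2 * ‖φ‖)
      simp only [mul_zero] at h3
      convert h3 using 2 with n
      ring
    have hev : ∀ᶠ n in atTop,
        (c n)⁻¹ * (2 * ‖φ‖ * (lamG (symmDiff (F n) ((fun t => l * t) '' (F n)))).toReal) < δ := by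
      exact hFol.eventually_lt_const hδ
    filter_upwards [hev] with n hn
    have : ‖Av n z - Av n y‖ = |Av n z - Av n y| := rfl
    rw [Real.norm_eq_abs]
    have hsplit : Av n z - Av n y = (Av n z - Av n (g₀ • y)) + (Av n (g₀ • y) - Av n (l • y))
        + (Av n (l • y) - Av n y) := by ring
    calc |Av n z - Av n y|
        ≤ |Av n z - Av n (g₀ • y)| + |Av n (g₀ • y) - Av n (l • y)|
          + |Av n (l • y) - Av n y| := by
          rw [hsplit]
          exact (abs_add_le _ _).trans (add_le_add_left (abs_add_le _ _) _)
      _ < 3 * δ + δ + δ := by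
          have := (htrans n).trans_lt hn
          have h1 := hint1 n
          have h2 := hint2 n
          linarith
      _ ≤ ε0 := by rw [hδ_def]; linarith
  -- Fubini: the μ-average of Av n equals the space average of φ
  have havg : ∀ n, ∫ z, Av n z ∂μ = ∫ z, φ z ∂μ := by
    intro n
    haveI : Fact (lamG (F n) < ⊤) := ⟨(hFcomp n).measure_lt_top⟩
    have hcont2 : Continuous fun p : X × G => φ (p.2 • p.1) :=
      φ.continuous.comp (continuous_snd.smul continuous_fst)
    have hintp : Integrable (Function.uncurry fun z t => φ (t • z))
        (μ.prod (lamG.restrict (F n))) := by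
      refine (integrable_const ‖φ‖).mono' hcont2.aestronglyMeasurable ?_
      exact Filter.Eventually.of_forall fun p => φ.norm_coe_le_norm _
    have hswap := MeasureTheory.integral_integral_swap hintp
    have hinner : ∀ t : G, ∫ z, φ (t • z) ∂μ = ∫ z, φ z ∂μ := by
      intro t
      conv_rhs => rw [← hinv t]
      rw [integral_map (continuous_const_smul t).measurable.aemeasurable
        φ.continuous.aestronglyMeasurable]
    have hI2 : ∫ z, I n z ∂μ = c n * ∫ z, φ z ∂μ := by
      simp only [hI_def]
      rw [hswap]
      simp only [hinner]
      rw [integral_const]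
      simp [Measure.restrict_apply_univ, hc_def, smul_eq_mul, Measure.real]
    have hAvint : ∫ z, Av n z ∂μ = (c n)⁻¹ * ∫ z, I n z ∂μ := by
      simp only [hAv_def]
      exact integral_const_mul _ _
    rw [hAvint, hI2, ← mul_assoc, inv_mul_cancel₀ (hc_pos n).ne', one_mul]
  -- dominated convergence towards zero
  have hAbnd : ∀ n z, |Av n z| ≤ ‖φ‖ := by
    intro n z
    simp only [hAv_def]
    rw [abs_mul, abs_of_nonneg (inv_nonneg.mpr (hc_pos n).le)]
    calc (c n)⁻¹ * |I n z| ≤ (c n)⁻¹ * (‖φ‖ * c n) :=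
        mul_le_mul_of_nonneg_left (hIbound n z) (inv_nonneg.mpr (hc_pos n).le)
      _ = ‖φ‖ := by
          rw [inv_mul_eq_div, mul_div_assoc, div_self (hc_pos n).ne', mul_one]
  have hDCT : Tendsto (fun n => ∫ z, |Av n y - Av n z| ∂μ) atTop (𝓝 0) := by
    have h0 : (0:ℝ) = ∫ (_ : X), (0:ℝ) ∂μ := by simp
    rw [h0]
    refine MeasureTheory.tendsto_integral_of_dominated_convergence
      (bound := fun _ => 2 * ‖φ‖) (fun n => ?_) ?_ (fun n => ?_) ?_
    · have : Continuous fun z => |Av n y - Av n z| := by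
        refine (continuous_const.sub ?_).abs
        exact (continuous_const.mul (hIcont n))
      exact this.aestronglyMeasurable
    · exact integrable_const _
    · refine Filter.Eventually.of_forall fun z => ?_
      rw [Real.norm_eq_abs, abs_abs]
      calc |Av n y - Av n z| ≤ |Av n y| + |Av n z| := abs_sub _ _
        _ ≤ ‖φ‖ + ‖φ‖ := add_le_add (hAbnd n y) (hAbnd n z)
        _ = 2 * ‖φ‖ := by ring
    · refine Filter.Eventually.of_forall fun z => ?_
      have h1 : Tendsto (fun n => Av n z - Av n y) atTop (𝓝 0) := heart z
      have h2 : Tendsto (fun n => |Av n y - Av n z|) atTop (𝓝 0) := by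
        have := h1.abs
        simp only [abs_zero] at this
        convert this using 2 with n
        rw [abs_sub_comm]
      exact h2
  have hAy : Tendsto (fun n => Av n y) atTop (𝓝 (∫ z, φ z ∂μ)) := by
    have hbound : ∀ n, ‖Av n y - ∫ z, φ z ∂μ‖ ≤ ∫ z, |Av n y - Av n z| ∂μ := by
      intro n
      have hintAv : Integrable (fun z => Av n z) μ := by
        refine (integrable_const ‖φ‖).mono'
          ((continuous_const.mul (hIcont n)).aestronglyMeasurable) ?_
        exact Filter.Eventually.of_forall fun z => by
          rw [Real.norm_eq_abs]; exact hAbnd n z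
      have heq : Av n y - ∫ z, φ z ∂μ = ∫ z, (Av n y - Av n z) ∂μ := by
        rw [integral_sub (integrable_const _) hintAv, integral_const]
        simp [havg n]
      rw [heq]
      calc ‖∫ z, (Av n y - Av n z) ∂μ‖ ≤ ∫ z, ‖Av n y - Av n z‖ ∂μ :=
          norm_integral_le_integral_norm _
        _ = ∫ z, |Av n y - Av n z| ∂μ := by simp [Real.norm_eq_abs]
    have : Tendsto (fun n => Av n y - ∫ z, φ z ∂μ) atTop (𝓝 0) :=
      squeeze_zero_norm hbound hDCT
    have := this.add_const (∫ z, φ z ∂μ)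
    simpa using this
  have hfinal : Tendsto (fun n => Av n x) atTop (𝓝 (∫ z, φ z ∂μ)) := by
    have := (heart x).add hAy
    simp only [zero_add] at this
    convert this using 2 with n
    ring
  exact hfinal
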